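/- Let K ⊂ E be a compact product with equilibrium state μ, and let φ be a Hausdorff function. If the upper φ-density D̄ = limsup_{ε→0} μ(B(x,ε))/φ(ε) (constant over x ∈ K) satisfies 0 < D̄ < ∞, then the φ-Hausdorff measure of K equals 1/D̄. -/

import Mathlib

open scoped Classical ENNReal
open Filter Topology MeasureTheory

/-- The minimal index (counting from 1) at which two elements of the compact product
`K = ∏_k {1,…,n k}` differ. -/
noncomputable def chiK {n : ℕ → ℕ} (x y : ∀ k, Fin (n k)) : ℕ := sInf {k | x k ≠ y k} + 1

/-- The ultrametric `δ(x,y) = 2^{-χ(x,y)}` on the compact product. -/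
noncomputable def deltaK {n : ℕ → ℕ} (x y : ∀ k, Fin (n k)) : ℝ :=
  if x = y then 0 else (2 : ℝ) ^ (-(chiK x y : ℤ))

/-- The open `δ`-ball of center `x` and radius `ε`. -/
def BallK {n : ℕ → ℕ} (x : ∀ k, Fin (n k)) (ε : ℝ) : Set (∀ k, Fin (n k)) :=
  {y | deltaK x y < ε}

/-- The equilibrium state: the product of the uniform probability measures, characterized
by its values on cylinders. -/
def IsEquilibrium {n : ℕ → ℕ} (μ : Measure (∀ k, Fin (n k))) : Prop :=
  ∀ (k : ℕ) (s : ∀ j, Fin (n j)),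
    μ {y | ∀ j < k, y j = s j} = ∏ j ∈ Finset.range k, ((n j : ℝ≥0∞))⁻¹

/-- Hausdorff functions: continuous nondecreasing, vanishing exactly at `0`. -/
def IsHausdorffFn (φ : ℝ → ℝ) : Prop :=
  ContinuousOn φ (Set.Ici 0) ∧ MonotoneOn φ (Set.Ici 0) ∧ φ 0 = 0 ∧ ∀ ε > 0, 0 < φ ε

/-- The upper `φ`-density of `μ` at `x`. -/
noncomputable def upperDensK {n : ℕ → ℕ} (μ : Measure (∀ k, Fin (n k))) (φ : ℝ → ℝ)
    (x : ∀ k, Fin (n k)) : ℝ≥0∞ :=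
  Filter.limsup (fun ε : ℝ => μ (BallK x ε) / ENNReal.ofReal (φ ε)) (𝓝[>] 0)

/-- The lower `φ`-density of `μ` at `x`. -/
noncomputable def lowerDensK {n : ℕ → ℕ} (μ : Measure (∀ k, Fin (n k))) (φ : ℝ → ℝ)
    (x : ∀ k, Fin (n k)) : ℝ≥0∞ :=
  Filter.liminf (fun ε : ℝ => μ (BallK x ε) / ENNReal.ofReal (φ ε)) (𝓝[>] 0)

/-- The `φ`-Hausdorff measure on the compact product, defined via countable covers by
open balls of radii at most `ε`, letting `ε → 0`. -/
noncomputable def HK {n : ℕ → ℕ} (φ : ℝ → ℝ) (S : Set (∀ k, Fin (n k))) : ℝ≥0∞ :=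
  ⨆ (ε : ℝ) (_ : 0 < ε),
    ⨅ (c : ℕ → (∀ k, Fin (n k)) × ℝ)
      (_ : (∀ i, 0 ≤ (c i).2 ∧ (c i).2 ≤ ε) ∧ S ⊆ ⋃ i, BallK (c i).1 (c i).2),
      ∑' i, ENNReal.ofReal (φ (c i).2)

/-- The `φ`-packing premeasure on the compact product, defined via countable packs by
disjoint open balls centered in the set, of radii at most `ε`, letting `ε → 0`. -/
noncomputable def PK0 {n : ℕ → ℕ} (φ : ℝ → ℝ) (S : Set (∀ k, Fin (n k))) : ℝ≥0∞ :=
  ⨅ (ε : ℝ) (_ : 0 < ε),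
    ⨆ (c : ℕ → (∀ k, Fin (n k)) × ℝ)
      (_ : (∀ i, (c i).1 ∈ S ∧ 0 ≤ (c i).2 ∧ (c i).2 ≤ ε) ∧
        Pairwise fun i j => Disjoint (BallK (c i).1 (c i).2) (BallK (c j).1 (c j).2)),
      ∑' i, ENNReal.ofReal (φ (c i).2)

/-- The `φ`-packing measure on the compact product. -/
noncomputable def PK {n : ℕ → ℕ} (φ : ℝ → ℝ) (S : Set (∀ k, Fin (n k))) : ℝ≥0∞ :=
  ⨅ (F : ℕ → Set (∀ k, Fin (n k))) (_ : S ⊆ ⋃ m, F m), ∑' m, PK0 φ (F m)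


section Aux

lemma two_zpow_le' {a b : ℕ} (h : a ≤ b) : (2:ℝ) ^ (-(b+1:ℤ)) ≤ (2:ℝ) ^ (-(a+1:ℤ)) := by
  apply zpow_le_zpow_right₀ one_le_two
  omega

lemma two_zpow_pos' (a : ℤ) : (0:ℝ) < 2 ^ a := by positivity

lemma deltaK_nonneg' {n : ℕ → ℕ} (x y : ∀ k, Fin (n k)) : 0 ≤ deltaK x y := by
  unfold deltaK
  split
  · exact le_refl 0
  · positivity

lemma ballK_eq_cylinder {n : ℕ → ℕ} (x : ∀ k, Fin (n k)) {ε : ℝ} {m : ℕ}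
    (hm : (2:ℝ) ^ (-(m+1:ℤ)) < ε)
    (hmin : ∀ j < m, ¬ ((2:ℝ) ^ (-(j+1:ℤ)) < ε)) :
    BallK x ε = {y | ∀ j < m, y j = x j} := by
  have hε : 0 < ε := lt_trans (two_zpow_pos' _) hm
  ext y
  simp only [BallK, Set.mem_setOf_eq, deltaK]
  constructor
  · intro hy j hj
    by_cases hxy : x = y
    · rw [hxy]
    · rw [if_neg hxy] at hy
      have hS : {k | x k ≠ y k}.Nonempty := Function.ne_iff.mp hxy
      set m₀ := sInf {k | x k ≠ y k} with hm₀def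
      have hy' : (2:ℝ) ^ (-(m₀+1:ℤ)) < ε := by
        have hc : (chiK x y : ℤ) = (m₀ : ℤ) + 1 := by
          simp [chiK, hm₀def]
        rwa [show (-(chiK x y : ℤ)) = -((m₀:ℤ)+1) by rw [hc]] at hy
      have hmm₀ : m ≤ m₀ := by
        by_contra h
        exact hmin m₀ (by omega) hy'
      have hjm₀ : j < m₀ := lt_of_lt_of_le hj hmm₀
      have hnm : j ∉ {k | x k ≠ y k} := Nat.notMem_of_lt_sInf hjm₀
      simp only [Set.mem_setOf_eq, not_not] at hnm
      exact hnm.symm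
  · intro hy
    by_cases hxy : x = y
    · rw [if_pos hxy]; exact hε
    · rw [if_neg hxy]
      have hS : {k | x k ≠ y k}.Nonempty := Function.ne_iff.mp hxy
      set m₀ := sInf {k | x k ≠ y k} with hm₀def
      have hmem : x m₀ ≠ y m₀ := Nat.sInf_mem hS
      have hmm₀ : m ≤ m₀ := by
        by_contra h
        exact hmem ((hy m₀ (by omega)).symm)
      have hc : (chiK x y : ℤ) = (m₀ : ℤ) + 1 := by
        simp [chiK, hm₀def]
      rw [show (-(chiK x y : ℤ)) = -((m₀:ℤ)+1) by rw [hc]]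
      calc (2:ℝ) ^ (-((m₀:ℤ)+1)) ≤ (2:ℝ) ^ (-(m+1:ℤ)) := two_zpow_le' hmm₀
        _ < ε := hm

end Aux

/-- If the upper `φ`-density of the equilibrium state (constant over the compact product)
is positive and finite, then the `φ`-Hausdorff measure of the whole product is its
reciprocal. -/
theorem stmt11 (n : ℕ → ℕ) (hn : ∀ k, 0 < n k) (μ : Measure (∀ k, Fin (n k)))
    (hμ : IsEquilibrium μ) (φ : ℝ → ℝ) (hφ : IsHausdorffFn φ)
    (D : ℝ≥0∞) (hD : ∀ x, upperDensK μ φ x = D) (hD0 : 0 < D) (hDtop : D < ⊤) :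
    HK φ (Set.univ : Set (∀ k, Fin (n k))) = D⁻¹ := by
  classical
  have x₀ : ∀ k, Fin (n k) := fun k => ⟨0, hn k⟩
  have hex : ∀ ε : ℝ, 0 < ε → ∃ m : ℕ, (2:ℝ) ^ (-(m+1:ℤ)) < ε := by
    intro ε hε
    obtain ⟨m, hm⟩ := exists_pow_lt_of_lt_one hε (by norm_num : (1/2:ℝ) < 1)
    refine ⟨m, lt_of_le_of_lt ?_ hm⟩
    rw [show (-(m+1:ℤ)) = -((m+1:ℕ):ℤ) by push_cast; ring, zpow_neg, zpow_natCast]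
    rw [show ((1:ℝ)/2)^m = ((2:ℝ)^m)⁻¹ by rw [one_div, inv_pow]]
    apply inv_anti₀ (by positivity)
    exact pow_le_pow_right₀ one_le_two (Nat.le_succ m)
  set M : ℝ → ℕ := fun ε => if hε : 0 < ε then Nat.find (hex ε hε) else 0 with hMdef
  have hMspec : ∀ ε : ℝ, ∀ hε : 0 < ε, (2:ℝ) ^ (-(M ε + 1:ℤ)) < ε := by
    intro ε hε
    simp only [hMdef, dif_pos hε]
    exact Nat.find_spec (hex ε hε)
  have hMmin : ∀ ε : ℝ, ∀ hε : 0 < ε, ∀ j < M ε, ¬ ((2:ℝ) ^ (-(j+1:ℤ)) < ε) := by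
    intro ε hε j hj
    simp only [hMdef, dif_pos hε] at hj
    exact Nat.find_min (hex ε hε) hj
  set f : ℝ → ℝ≥0∞ := fun ε => ∏ j ∈ Finset.range (M ε), ((n j : ℝ≥0∞))⁻¹ with hfdef
  have hball : ∀ (x : ∀ k, Fin (n k)) (ε : ℝ), 0 < ε → μ (BallK x ε) = f ε := by
    intro x ε hε
    rw [ballK_eq_cylinder x (hMspec ε hε) (hMmin ε hε), hμ (M ε) x]
  have hcard : ∀ m : ℕ,
      (∏ j ∈ Finset.range m, (n j : ℝ≥0∞)) * ∏ j ∈ Finset.range m, ((n j : ℝ≥0∞))⁻¹ = 1 := by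
    intro m
    rw [← Finset.prod_mul_distrib]
    apply Finset.prod_eq_one
    intro j _
    exact ENNReal.mul_inv_cancel (Nat.cast_ne_zero.mpr (hn j).ne') (ENNReal.natCast_ne_top _)
  have hg : Filter.limsup (fun ε : ℝ => μ (BallK x₀ ε) / ENNReal.ofReal (φ ε)) (𝓝[>] 0) = D :=
    hD x₀
  have hμuniv : μ Set.univ = 1 := by
    have h0 := hμ 0 x₀
    simpa using h0
  -- upper bound
  have upper : ∀ a : ℝ≥0∞, 0 < a → a < D → HK φ (Set.univ : Set (∀ k, Fin (n k))) ≤ a⁻¹ := by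
    intro a ha0 haD
    have hatop : a ≠ ⊤ := (lt_of_lt_of_le haD hDtop.le).ne
    rw [HK]
    apply iSup₂_le
    intro ε hε
    have hfreq : ∃ᶠ t in 𝓝[>] (0:ℝ), a < μ (BallK x₀ t) / ENNReal.ofReal (φ t) := by
      apply Filter.frequently_lt_of_lt_limsup (by isBoundedDefault)
      rw [hg]; exact haD
    have hIoo : Set.Ioo (0:ℝ) ε ∈ 𝓝[>] (0:ℝ) := Ioo_mem_nhdsGT_of_mem ⟨le_refl 0, hε⟩
    obtain ⟨t, hat, ht0, htε⟩ :=
      (hfreq.and_eventually (eventually_of_mem hIoo (fun _ h => h))).exists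
    set m := M t with hm
    set N := Fintype.card (∀ j : Fin m, Fin (n j.1)) with hNdef
    set e : Fin N ≃ (∀ j : Fin m, Fin (n j.1)) := (Fintype.equivFin _).symm with hedef
    set c : ℕ → (∀ k, Fin (n k)) × ℝ := fun i =>
      if h : i < N then ((fun k => if hk : k < m then e ⟨i, h⟩ ⟨k, hk⟩ else ⟨0, hn k⟩), t)
      else ((fun k => ⟨0, hn k⟩), 0) with hcdef
    have hcyl : BallK (x₀) t = {y | ∀ j < m, y j = x₀ j} :=
      ballK_eq_cylinder x₀ (hMspec t ht0) (hMmin t ht0)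
    have hcond : (∀ i, 0 ≤ (c i).2 ∧ (c i).2 ≤ ε) ∧
        (Set.univ : Set (∀ k, Fin (n k))) ⊆ ⋃ i, BallK (c i).1 (c i).2 := by
      constructor
      · intro i
        by_cases h : i < N
        · simp only [hcdef, dif_pos h]
          exact ⟨ht0.le, htε.le⟩
        · simp only [hcdef, dif_neg h]
          exact ⟨le_refl 0, hε.le⟩
      · intro y _
        set s : ∀ j : Fin m, Fin (n j.1) := fun j => y j.1 with hsdef
        have hiN : ((e.symm s : Fin N) : ℕ) < N := (e.symm s).2
        refine Set.mem_iUnion.mpr ⟨(e.symm s : Fin N), ?_⟩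
        simp only [hcdef, dif_pos hiN]
        rw [ballK_eq_cylinder _ (hMspec t ht0) (hMmin t ht0)]
        intro j hj
        simp only [dif_pos (show j < m from hj)]
        have heta : (⟨((e.symm s : Fin N) : ℕ), hiN⟩ : Fin N) = e.symm s := by
          apply Fin.ext; rfl
        rw [heta, Equiv.apply_symm_apply]
    have hv0 : ENNReal.ofReal (φ t) ≠ 0 := (ENNReal.ofReal_pos.mpr (hφ.2.2.2 t ht0)).ne'
    have hvtop : ENNReal.ofReal (φ t) ≠ ⊤ := ENNReal.ofReal_ne_top
    have hsum : ∑' i, ENNReal.ofReal (φ (c i).2) = N * ENNReal.ofReal (φ t) := by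
      have h1 : ∀ i, ENNReal.ofReal (φ (c i).2) =
          if i < N then ENNReal.ofReal (φ t) else 0 := by
        intro i
        by_cases h : i < N
        · simp only [hcdef, dif_pos h, if_pos h]
        · simp only [hcdef, dif_neg h, if_neg h, hφ.2.2.1, ENNReal.ofReal_zero]
      calc ∑' i, ENNReal.ofReal (φ (c i).2)
          = ∑' i, if i < N then ENNReal.ofReal (φ t) else 0 := tsum_congr h1
        _ = ∑ i ∈ Finset.range N, (if i < N then ENNReal.ofReal (φ t) else 0) := by
            refine tsum_eq_sum ?_
            intro i hi
            rw [if_neg (by simpa using hi)]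
        _ = ∑ i ∈ Finset.range N, ENNReal.ofReal (φ t) :=
            Finset.sum_congr rfl (fun i hi => if_pos (Finset.mem_range.mp hi))
        _ = N * ENNReal.ofReal (φ t) := by
            rw [Finset.sum_const, Finset.card_range, nsmul_eq_mul]
    rw [hball x₀ t ht0] at hat
    have hva : ENNReal.ofReal (φ t) ≤ f t / a := by
      rw [ENNReal.le_div_iff_mul_le (Or.inl ha0.ne') (Or.inl hatop)]
      have hlt := (ENNReal.lt_div_iff_mul_lt (Or.inl hv0) (Or.inl hvtop)).mp hat
      rw [mul_comm]
      exact hlt.le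
    have hNcast : (N : ℝ≥0∞) = ∏ j ∈ Finset.range m, (n j : ℝ≥0∞) := by
      rw [hNdef, Fintype.card_pi]
      push_cast
      rw [← Fin.prod_univ_eq_prod_range (fun j => (n j : ℝ≥0∞)) m]
      simp [Fintype.card_fin]
    have hfin : (N : ℝ≥0∞) * (f t / a) = a⁻¹ := by
      rw [← mul_div_assoc, hNcast, hfdef]
      simp only []
      rw [← hm, hcard m, one_div]
    refine le_trans (iInf₂_le c hcond) ?_
    rw [hsum]
    calc (N : ℝ≥0∞) * ENNReal.ofReal (φ t) ≤ (N : ℝ≥0∞) * (f t / a) :=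
          mul_le_mul_right hva _
      _ = a⁻¹ := hfin
  -- lower bound
  have lower : ∀ b : ℝ≥0∞, D < b → b < ⊤ → b⁻¹ ≤ HK φ (Set.univ : Set (∀ k, Fin (n k))) := by
    intro b hDb hbtop
    have hb0 : b ≠ 0 := (lt_trans hD0 hDb).ne'
    have hev : ∀ᶠ t in 𝓝[>] (0:ℝ), μ (BallK x₀ t) / ENNReal.ofReal (φ t) < b := by
      apply Filter.eventually_lt_of_limsup_lt
      · rw [hg]; exact hDb
      · isBoundedDefault
    obtain ⟨u, hu0, hu⟩ := mem_nhdsGT_iff_exists_Ioo_subset.mp hev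
    rw [Set.mem_Ioi] at hu0
    have hhalf : 0 < u / 2 := half_pos hu0
    have hkey : b⁻¹ ≤ ⨅ (c : ℕ → (∀ k, Fin (n k)) × ℝ)
        (_ : (∀ i, 0 ≤ (c i).2 ∧ (c i).2 ≤ u/2) ∧
          (Set.univ : Set (∀ k, Fin (n k))) ⊆ ⋃ i, BallK (c i).1 (c i).2),
        ∑' i, ENNReal.ofReal (φ (c i).2) := by
      refine le_iInf₂ ?_
      intro c hcond
      obtain ⟨hrad, hcov⟩ := hcond
      have key : ∀ i, μ (BallK (c i).1 (c i).2) ≤ b * ENNReal.ofReal (φ (c i).2) := by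
        intro i
        rcases lt_or_eq_of_le (hrad i).1 with hr | hr
        · have hrIoo : (c i).2 ∈ Set.Ioo (0:ℝ) u :=
            ⟨hr, lt_of_le_of_lt (hrad i).2 (half_lt_self hu0)⟩
          have hlt : μ (BallK x₀ (c i).2) / ENNReal.ofReal (φ (c i).2) < b := hu hrIoo
          rw [hball x₀ _ hr] at hlt
          rw [hball _ _ hr]
          have hv0 : ENNReal.ofReal (φ (c i).2) ≠ 0 :=
            (ENNReal.ofReal_pos.mpr (hφ.2.2.2 _ hr)).ne'
          exact (ENNReal.div_le_iff_le_mul (Or.inl hv0) (Or.inl ENNReal.ofReal_ne_top)).mp hlt.le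
        · have hempty : BallK (c i).1 (c i).2 = ∅ := by
            ext y
            simp only [BallK, Set.mem_setOf_eq, Set.mem_empty_iff_false, iff_false, not_lt,
              ← hr]
            exact deltaK_nonneg' _ _
          simp [hempty]
      have h1S : 1 ≤ (∑' i, ENNReal.ofReal (φ (c i).2)) * b := by
        calc (1 : ℝ≥0∞) = μ Set.univ := hμuniv.symm
          _ ≤ μ (⋃ i, BallK (c i).1 (c i).2) := measure_mono hcov
          _ ≤ ∑' i, μ (BallK (c i).1 (c i).2) := measure_iUnion_le _
          _ ≤ ∑' i, b * ENNReal.ofReal (φ (c i).2) := ENNReal.tsum_le_tsum key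
          _ = b * ∑' i, ENNReal.ofReal (φ (c i).2) := ENNReal.tsum_mul_left
          _ = (∑' i, ENNReal.ofReal (φ (c i).2)) * b := mul_comm _ _
      calc b⁻¹ = 1 / b := (one_div b).symm
        _ ≤ ∑' i, ENNReal.ofReal (φ (c i).2) := by
            rw [ENNReal.div_le_iff_le_mul (Or.inl hb0) (Or.inl hbtop.ne)]
            exact h1S
    rw [HK]
    exact le_iSup₂_of_le (u/2) hhalf hkey
  apply le_antisymm
  · by_contra hcon
    push_neg at hcon
    obtain ⟨cc, h1, h2⟩ := exists_between hcon
    have hcc_top : cc ≠ ⊤ := h2.ne_top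
    have hlt : cc⁻¹ < D := by
      rw [← inv_inv D]
      exact ENNReal.inv_lt_inv.mpr h1
    have hup := upper cc⁻¹ (ENNReal.inv_pos.mpr hcc_top) hlt
    rw [inv_inv] at hup
    exact absurd h2 (not_lt.mpr hup)
  · by_contra hcon
    push_neg at hcon
    obtain ⟨cc, h1, h2⟩ := exists_between hcon
    have hcc0 : (0:ℝ≥0∞) < cc := lt_of_le_of_lt zero_le h1
    have hDb : D < cc⁻¹ := by
      rw [← inv_inv D]
      exact ENNReal.inv_lt_inv.mpr h2
    have hbt : cc⁻¹ < ⊤ := ENNReal.inv_lt_top.mpr hcc0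
    have hlo := lower cc⁻¹ hDb hbt
    rw [inv_inv] at hlo
    exact absurd h1 (not_lt.mpr hlo)
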